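/- Let g be a homeomorphism of a dendrite X, and let I₁ = [x₁,y₁] and I₂ = [x₂,y₂] be two distinct austro-boreal arcs for g. Then the open arcs I₁ ∖ {x₁,y₁} and I₂ ∖ {x₂,y₂} are disjoint. -/

import Mathlib

open Set

/-- A dendrite: a nonempty compact connected metrizable space that is locally
connected and contains no simple closed curve. -/
def IsDendrite (X : Type*) [TopologicalSpace X] : Prop :=
  Nonempty X ∧ CompactSpace X ∧ ConnectedSpace X ∧ TopologicalSpace.MetrizableSpace X ∧
    LocallyConnectedSpace X ∧ ¬ ∃ S : Set X, Nonempty (S ≃ₜ Circle)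

section ArcMachinery

set_option linter.unusedSectionVars false

variable {X : Type*} [TopologicalSpace X] [T2Space X]


/-- An arc from `u` to `v` with image `A`. -/
def IsArcAB (A : Set X) (u v : X) : Prop :=
  ∃ f : ℝ → X, ContinuousOn f (Icc 0 1) ∧ InjOn f (Icc 0 1) ∧ f '' Icc 0 1 = A ∧
    f 0 = u ∧ f 1 = v

lemma loop_circleAB {F : ℝ → X} (hc : ContinuousOn F (Icc 0 1)) (hi : InjOn F (Ico 0 1))
    (h01 : F 0 = F 1) : ∃ S : Set X, Nonempty (S ≃ₜ Circle) := by
  haveI : Fact ((0:ℝ) < 1) := ⟨one_pos⟩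
  let G : AddCircle (1:ℝ) → X := AddCircle.liftIco 1 0 F
  have hGc : Continuous G := AddCircle.liftIco_zero_continuous h01 hc
  have hGi : Function.Injective G := by
    intro x y hxy
    have hx := (AddCircle.equivIco 1 0 x).2
    have hy := (AddCircle.equivIco 1 0 y).2
    have hx' : ((AddCircle.equivIco 1 0 x : Ico (0:ℝ) (0+1)) : ℝ) ∈ Ico (0:ℝ) 1 := by
      simpa using hx
    have hy' : ((AddCircle.equivIco 1 0 y : Ico (0:ℝ) (0+1)) : ℝ) ∈ Ico (0:ℝ) 1 := by
      simpa using hy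
    have h : ((AddCircle.equivIco 1 0 x : Ico (0:ℝ) (0+1)) : ℝ)
        = ((AddCircle.equivIco 1 0 y : Ico (0:ℝ) (0+1)) : ℝ) := hi hx' hy' hxy
    exact (AddCircle.equivIco 1 0).injective (Subtype.ext h)
  have emb := hGc.isClosedEmbedding hGi
  exact ⟨Set.range G,
    ⟨(Topology.IsEmbedding.toHomeomorph emb.toIsEmbedding).symm.trans
      (AddCircle.homeomorphCircle one_ne_zero)⟩⟩

lemma affine_imageAB {s t : ℝ} (h : s < t) :
    (fun r : ℝ => s + r * (t - s)) '' Icc 0 1 = Icc s t := by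
  ext q
  constructor
  · rintro ⟨r, ⟨h0, h1⟩, rfl⟩
    simp only
    constructor <;> nlinarith
  · rintro ⟨hq1, hq2⟩
    refine ⟨(q - s) / (t - s), ⟨div_nonneg (by linarith) (by linarith),
      (div_le_one (by linarith)).mpr (by linarith)⟩, ?_⟩
    simp only
    rw [div_mul_cancel₀ _ (by linarith : t - s ≠ 0)]
    ring

lemma subarcAB {f : ℝ → X} (hc : ContinuousOn f (Icc 0 1)) (hi : InjOn f (Icc 0 1))
    {s t : ℝ} (hs : s ∈ Icc (0:ℝ) 1) (ht : t ∈ Icc (0:ℝ) 1) (hst : s < t) :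
    IsArcAB (f '' Icc s t) (f s) (f t) := by
  have hmap : ∀ r ∈ Icc (0:ℝ) 1, s + r * (t - s) ∈ Icc (0:ℝ) 1 := by
    rintro r ⟨h0, h1⟩
    exact ⟨by nlinarith [hs.1], by nlinarith [ht.2]⟩
  refine ⟨fun r => f (s + r * (t - s)), ?_, ?_, ?_, by norm_num, ?_⟩
  · exact hc.comp ((continuous_const.add (continuous_id.mul continuous_const)).continuousOn) hmap
  · intro a ha b hb hab
    have := hi (hmap a ha) (hmap b hb) hab
    have h2 : a * (t - s) = b * (t - s) := by linarith
    exact mul_right_cancel₀ (sub_ne_zero.mpr hst.ne') h2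
  · rw [show (fun r => f (s + r * (t - s))) '' Icc 0 1
        = f '' ((fun r : ℝ => s + r * (t - s)) '' Icc 0 1) from (image_image _ _ _).symm,
      affine_imageAB hst]
  · show f (s + 1 * (t - s)) = f t
    congr 1; ring

lemma IsArcAB.symm {A : Set X} {u v : X} (h : IsArcAB A u v) : IsArcAB A v u := by
  obtain ⟨f, hc, hi, hA, h0, h1⟩ := h
  have hmap : ∀ r ∈ Icc (0:ℝ) 1, 1 - r ∈ Icc (0:ℝ) 1 := by
    rintro r ⟨a, b⟩; exact ⟨by linarith, by linarith⟩
  refine ⟨fun r => f (1 - r), ?_, ?_, ?_, by norm_num [h1], by norm_num [h0]⟩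
  · exact hc.comp ((continuous_const.sub continuous_id).continuousOn) hmap
  · intro a ha b hb hab
    have := hi (hmap a ha) (hmap b hb) hab
    linarith
  · rw [show (fun r => f (1 - r)) '' Icc 0 1 = f '' ((fun r : ℝ => 1 - r) '' Icc 0 1)
        from (image_image _ _ _).symm]
    rw [show (fun r : ℝ => 1 - r) '' Icc 0 1 = Icc 0 1 by
      ext q
      constructor
      · rintro ⟨r, ⟨a, b⟩, rfl⟩; simp only; exact ⟨by linarith, by linarith⟩
      · rintro ⟨a, b⟩; exact ⟨1 - q, ⟨by linarith, by linarith⟩, by ring⟩]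
    exact hA

lemma IsArcAB.image {A : Set X} {u v : X} (g : X ≃ₜ X) (h : IsArcAB A u v) :
    IsArcAB (g '' A) (g u) (g v) := by
  obtain ⟨f, hc, hi, hA, h0, h1⟩ := h
  exact ⟨fun r => g (f r), g.continuous.comp_continuousOn hc,
    fun a ha b hb hab => hi ha hb (g.injective hab),
    by rw [← hA, image_image], by simp [h0], by simp [h1]⟩

lemma arc_subsetAB (hnc : ¬∃ S : Set X, Nonempty (S ≃ₜ Circle)) {A B : Set X} {u v : X}
    (hA : IsArcAB A u v) (hB : IsArcAB B u v) : A ⊆ B := by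
  obtain ⟨f, hfc, hfi, rfl, hf0, hf1⟩ := hA
  obtain ⟨k, hkc, hki, rfl, hk0, hk1⟩ := hB
  intro x hx
  by_contra hxB
  obtain ⟨r, hr, rfl⟩ := hx
  have hkB : IsCompact (k '' Icc 0 1) := isCompact_Icc.image_of_continuousOn hkc
  have hU : IsClosed (Icc 0 1 ∩ f ⁻¹' (k '' Icc 0 1)) :=
    hfc.preimage_isClosed_of_isClosed isClosed_Icc hkB.isClosed
  have hf0B : f 0 ∈ k '' Icc 0 1 := ⟨0, ⟨le_refl 0, zero_le_one⟩, by rw [hk0, hf0]⟩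
  have hf1B : f 1 ∈ k '' Icc 0 1 := ⟨1, ⟨zero_le_one, le_refl 1⟩, by rw [hk1, hf1]⟩
  -- sup below r, inf above r of the set of parameters mapping into B
  have hbas : BddAbove ((Icc 0 1 ∩ f ⁻¹' (k '' Icc 0 1)) ∩ Icc 0 r) := ⟨r, fun x hx => hx.2.2⟩
  have hbbt : BddBelow ((Icc 0 1 ∩ f ⁻¹' (k '' Icc 0 1)) ∩ Icc r 1) := ⟨r, fun x hx => hx.2.1⟩
  have hnes : ((Icc 0 1 ∩ f ⁻¹' (k '' Icc 0 1)) ∩ Icc 0 r).Nonempty :=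
    ⟨0, ⟨⟨le_refl 0, zero_le_one⟩, hf0B⟩, le_refl 0, hr.1⟩
  have hnet : ((Icc 0 1 ∩ f ⁻¹' (k '' Icc 0 1)) ∩ Icc r 1).Nonempty :=
    ⟨1, ⟨⟨zero_le_one, le_refl 1⟩, hf1B⟩, hr.2, le_refl 1⟩
  set s := sSup ((Icc 0 1 ∩ f ⁻¹' (k '' Icc 0 1)) ∩ Icc 0 r) with hsdef
  set t := sInf ((Icc 0 1 ∩ f ⁻¹' (k '' Icc 0 1)) ∩ Icc r 1) with htdef
  have hsmem := (hU.inter isClosed_Icc).csSup_mem hnes hbas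
  have htmem := (hU.inter isClosed_Icc).csInf_mem hnet hbbt
  have hs01 : s ∈ Icc (0:ℝ) 1 := hsmem.1.1
  have ht01 : t ∈ Icc (0:ℝ) 1 := htmem.1.1
  have hsr : s < r := lt_of_le_of_ne hsmem.2.2 (fun h => hxB (h ▸ hsmem.1.2))
  have hrt : r < t := lt_of_le_of_ne htmem.2.1 (fun h => hxB (h ▸ htmem.1.2))
  have hst : s < t := hsr.trans hrt
  have hmid : ∀ q, s < q → q < t → f q ∉ k '' Icc 0 1 := by
    intro q hq1 hq2 hqB
    have hq01 : q ∈ Icc (0:ℝ) 1 := ⟨hs01.1.trans hq1.le, hq2.le.trans ht01.2⟩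
    rcases le_or_gt q r with h | h
    · exact absurd (le_csSup hbas ⟨⟨hq01, hqB⟩, hq01.1, h⟩) (not_le.mpr hq1)
    · exact absurd (csInf_le hbbt ⟨⟨hq01, hqB⟩, h.le, hq01.2⟩) (not_le.mpr hq2)
  obtain ⟨s', hs', hs'eq⟩ := hsmem.1.2
  obtain ⟨t', ht', ht'eq⟩ := htmem.1.2
  have hfst : f s ≠ f t := fun h => absurd (hfi hs01 ht01 h) hst.ne
  have hst' : s' ≠ t' := by
    intro h
    exact hfst (hs'eq ▸ ht'eq ▸ h ▸ rfl)
  -- the loop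
  set proj : ℝ → ℝ := fun x => max 0 (min x 1) with hprojdef
  have hproj_id : ∀ x : ℝ, 0 ≤ x → x ≤ 1 → proj x = x := by
    intro x h0 h1; rw [hprojdef]; simp only; rw [min_eq_left h1, max_eq_right h0]
  have hproj_mem : ∀ x : ℝ, proj x ∈ Icc (0:ℝ) 1 :=
    fun x => ⟨le_max_left _ _, max_le zero_le_one (min_le_right _ _)⟩
  have hprojc : Continuous proj := continuous_const.max (continuous_id.min continuous_const)
  set F : ℝ → X := fun x => if x ≤ 1/2 then f (proj (s + 2*x*(t-s)))
      else k (proj (t' + (2*x-1)*(s'-t'))) with hFdef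
  have hm1 : ∀ x : ℝ, 0 ≤ x → x ≤ 1/2 → s + 2*x*(t-s) ∈ Icc (0:ℝ) 1 := by
    intro x h0 h2
    exact ⟨by nlinarith [hs01.1], by nlinarith [ht01.2]⟩
  have hm2 : ∀ x : ℝ, 1/2 ≤ x → x ≤ 1 → t' + (2*x-1)*(s'-t') ∈ Icc (0:ℝ) 1 := by
    intro x h2 h1
    rcases le_total s' t' with h | h
    · exact ⟨by nlinarith [hs'.1, ht'.1], by nlinarith [hs'.2, ht'.2]⟩
    · exact ⟨by nlinarith [hs'.1, ht'.1], by nlinarith [hs'.2, ht'.2]⟩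
  have e1 : ∀ x : ℝ, 0 ≤ x → x ≤ 1/2 → F x = f (s + 2*x*(t-s)) := by
    intro x h0 h2
    rw [hFdef]; simp only [if_pos h2]
    rw [hproj_id _ (hm1 x h0 h2).1 (hm1 x h0 h2).2]
  have e2 : ∀ x : ℝ, 1/2 < x → x ≤ 1 → F x = k (t' + (2*x-1)*(s'-t')) := by
    intro x h2 h1
    rw [hFdef]; simp only [if_neg (not_le.mpr h2)]
    rw [hproj_id _ (hm2 x h2.le h1).1 (hm2 x h2.le h1).2]
  have hc1 : Continuous (fun x : ℝ => f (proj (s + 2*x*(t-s)))) :=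
    hfc.comp_continuous (hprojc.comp (by fun_prop)) (fun x => hproj_mem _)
  have hc2 : Continuous (fun x : ℝ => k (proj (t' + (2*x-1)*(s'-t')))) :=
    hkc.comp_continuous (hprojc.comp (by fun_prop)) (fun x => hproj_mem _)
  have hFc : Continuous F := by
    rw [hFdef]
    apply Continuous.if_le hc1 hc2 continuous_id continuous_const
    intro x hx
    simp only [id] at hx
    have h1 : s + 2*x*(t-s) = t := by rw [hx]; ring
    have h2 : t' + (2*x-1)*(s'-t') = t' := by rw [hx]; ring
    rw [h1, h2, hproj_id _ ht01.1 ht01.2, hproj_id _ ht'.1 ht'.2]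
    exact ht'eq.symm
  have hmix : ∀ a b : ℝ, 0 ≤ a → a ≤ 1/2 → 1/2 < b → b < 1 → F a ≠ F b := by
    intro a b ha0 ha2 hb2 hb1 heq
    rw [e1 a ha0 ha2, e2 b hb2 hb1.le] at heq
    have hqa : s ≤ s + 2*a*(t-s) := by nlinarith
    have hqb : s + 2*a*(t-s) ≤ t := by nlinarith
    have hq'mem : t' + (2*b-1)*(s'-t') ∈ Icc (0:ℝ) 1 := hm2 b hb2.le hb1.le
    have hq's : t' + (2*b-1)*(s'-t') ≠ s' := by
      intro h
      have h0 : (t' - s') * (2 - 2*b) = 0 := by linear_combination h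
      rcases mul_eq_zero.mp h0 with h' | h'
      · exact hst' (sub_eq_zero.mp h').symm
      · linarith
    have hq't : t' + (2*b-1)*(s'-t') ≠ t' := by
      intro h
      have h0 : (2*b - 1) * (s' - t') = 0 := by linear_combination h
      rcases mul_eq_zero.mp h0 with h' | h'
      · linarith
      · exact hst' (sub_eq_zero.mp h')
    rcases eq_or_lt_of_le hqa with hqs | hqs
    · -- the f-point is f s = k s'
      rw [← hqs] at heq
      exact hq's (hki hq'mem hs' (hs'eq.trans heq).symm)
    · rcases eq_or_lt_of_le hqb with hqt | hqt
      · rw [hqt] at heq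
        exact hq't (hki hq'mem ht' (ht'eq.trans heq).symm)
      · exact hmid _ hqs hqt ⟨_, hq'mem, heq.symm⟩
  have hFi : InjOn F (Ico 0 1) := by
    rintro a ⟨ha0, ha1⟩ b ⟨hb0, hb1⟩ heq
    rcases le_or_gt a (1/2) with ha2 | ha2 <;> rcases le_or_gt b (1/2) with hb2 | hb2
    · rw [e1 a ha0 ha2, e1 b hb0 hb2] at heq
      have h := hfi (hm1 a ha0 ha2) (hm1 b hb0 hb2) heq
      have h2 : (2*a) * (t - s) = (2*b) * (t - s) := by linarith
      have := mul_right_cancel₀ (sub_ne_zero.mpr hst.ne') h2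
      linarith
    · exact absurd heq (hmix a b ha0 ha2 hb2 hb1)
    · exact absurd heq.symm (hmix b a hb0 hb2 ha2 ha1)
    · rw [e2 a ha2 ha1.le, e2 b hb2 hb1.le] at heq
      have h := hki (hm2 a ha2.le ha1.le) (hm2 b hb2.le hb1.le) heq
      have h2 : (2*a - 2*b) * (s' - t') = 0 := by linear_combination h
      rcases mul_eq_zero.mp h2 with h' | h'
      · linarith
      · exact absurd (sub_eq_zero.mp h') hst'
  have hF01 : F 0 = F 1 := by
    rw [e1 0 (le_refl 0) (by norm_num), e2 1 (by norm_num) (le_refl 1)]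
    rw [show s + 2*0*(t-s) = s by ring, show t' + (2*1-1)*(s'-t') = s' by ring]
    exact hs'eq.symm
  exact hnc (loop_circleAB hFc.continuousOn hFi hF01)

lemma arc_uniqueAB (hnc : ¬∃ S : Set X, Nonempty (S ≃ₜ Circle)) {A B : Set X} {u v : X}
    (hA : IsArcAB A u v) (hB : IsArcAB B u v) : A = B :=
  subset_antisymm (arc_subsetAB hnc hA hB) (arc_subsetAB hnc hB hA)

lemma arc_selfmapAB (hnc : ¬∃ S : Set X, Nonempty (S ≃ₜ Circle)) {f : ℝ → X}
    (hfc : ContinuousOn f (Icc 0 1)) (hfi : InjOn f (Icc 0 1)) (g : X ≃ₜ X)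
    (hg0 : g (f 0) = f 0) (hg1 : g (f 1) = f 1) :
    ∃ φ : ℝ → ℝ, (∀ r ∈ Icc (0:ℝ) 1, φ r ∈ Icc (0:ℝ) 1 ∧ f (φ r) = g (f r)) ∧
      (∀ a ∈ Icc (0:ℝ) 1, ∀ b ∈ Icc (0:ℝ) 1, a ≤ b → φ a ≤ φ b) := by
  have h01 : (0:ℝ) ∈ Icc (0:ℝ) 1 := ⟨le_refl 0, zero_le_one⟩
  have hA : IsArcAB (f '' Icc 0 1) (f 0) (f 1) := ⟨f, hfc, hfi, rfl, rfl, rfl⟩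
  have hinv : g '' (f '' Icc 0 1) = f '' Icc 0 1 := by
    have h1 := hA.image g
    rw [hg0, hg1] at h1
    exact arc_uniqueAB hnc h1 hA
  have hex : ∀ r : ℝ, ∃ q, r ∈ Icc (0:ℝ) 1 → (q ∈ Icc (0:ℝ) 1 ∧ f q = g (f r)) := by
    intro r
    by_cases hr : r ∈ Icc (0:ℝ) 1
    · have : g (f r) ∈ f '' Icc 0 1 :=
        hinv ▸ mem_image_of_mem g (mem_image_of_mem f hr)
      obtain ⟨q, hq, hq'⟩ := this
      exact ⟨q, fun _ => ⟨hq, hq'⟩⟩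
    · exact ⟨0, fun h => absurd h hr⟩
  choose φ hφ using hex
  refine ⟨φ, fun r hr => hφ r hr, ?_⟩
  have key : ∀ r ∈ Icc (0:ℝ) 1, 0 < r → g '' (f '' Icc 0 r) = f '' Icc 0 (φ r) := by
    intro r hr hr0
    have hspec := hφ r hr
    have hφr0 : 0 < φ r := by
      rcases (hspec.1.1).lt_or_eq with h | h
      · exact h
      · exfalso
        have : f r = f 0 := by
          apply g.injective
          rw [← hspec.2, ← h, hg0]
        exact hr0.ne' (hfi hr h01 this)
    have h1 : IsArcAB (f '' Icc 0 r) (f 0) (f r) := subarcAB hfc hfi h01 hr hr0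
    have h2 := h1.image g
    rw [hg0, ← hspec.2] at h2
    have h3 : IsArcAB (f '' Icc 0 (φ r)) (f 0) (f (φ r)) := subarcAB hfc hfi h01 hspec.1 hφr0
    exact arc_uniqueAB hnc h2 h3
  intro a ha b hb hab
  rcases eq_or_lt_of_le ha.1 with h | h
  · -- a = 0
    have : φ a = 0 := by
      apply hfi (hφ a ha).1 h01
      rw [(hφ a ha).2, ← h, hg0]
    rw [this]
    exact (hφ b hb).1.1
  · have hka := key a ha h
    have hkb := key b hb (h.trans_le hab)
    have hsub : g '' (f '' Icc 0 a) ⊆ g '' (f '' Icc 0 b) :=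
      image_mono (image_mono (Icc_subset_Icc le_rfl hab))
    rw [hka, hkb] at hsub
    have hmem : f (φ a) ∈ f '' Icc 0 (φ b) :=
      hsub ⟨φ a, ⟨(hφ a ha).1.1, le_refl _⟩, rfl⟩
    obtain ⟨q, hq, hqe⟩ := hmem
    have hq01 : q ∈ Icc (0:ℝ) 1 := ⟨hq.1, hq.2.trans (hφ b hb).1.2⟩
    have : q = φ a := hfi hq01 (hφ a ha).1 hqe
    linarith [hq.2]

lemma ab_subsetAB (hnc : ¬∃ S : Set X, Nonempty (S ≃ₜ Circle)) (g : X ≃ₜ X) (f₁ f₂ : ℝ → X)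
    (hf₁c : ContinuousOn f₁ (Icc 0 1)) (hf₁i : InjOn f₁ (Icc 0 1))
    (hf₂c : ContinuousOn f₂ (Icc 0 1)) (hf₂i : InjOn f₂ (Icc 0 1))
    (hab₁ : {x : X | g x = x} ∩ (f₁ '' Icc 0 1) = {f₁ 0, f₁ 1})
    (hfix₂0 : g (f₂ 0) = f₂ 0) (hfix₂1 : g (f₂ 1) = f₂ 1)
    (p : X) (hp₁ : p ∈ f₁ '' Icc 0 1) (hp0 : p ≠ f₁ 0) (hp1 : p ≠ f₁ 1)
    (hp₂ : p ∈ f₂ '' Icc 0 1) : f₁ '' Icc 0 1 ⊆ f₂ '' Icc 0 1 := by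
  have h0m : (0:ℝ) ∈ Icc (0:ℝ) 1 := ⟨le_refl 0, zero_le_one⟩
  have h1m : (1:ℝ) ∈ Icc (0:ℝ) 1 := ⟨zero_le_one, le_refl 1⟩
  have hfix₁0 : g (f₁ 0) = f₁ 0 := by
    have h : f₁ 0 ∈ ({f₁ 0, f₁ 1} : Set X) := by left; rfl
    rw [← hab₁] at h; exact h.1
  have hfix₁1 : g (f₁ 1) = f₁ 1 := by
    have h : f₁ 1 ∈ ({f₁ 0, f₁ 1} : Set X) := by right; rfl
    rw [← hab₁] at h; exact h.1
  have hA₂ : IsArcAB (f₂ '' Icc 0 1) (f₂ 0) (f₂ 1) := ⟨f₂, hf₂c, hf₂i, rfl, rfl, rfl⟩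
  have hA₂g : g '' (f₂ '' Icc 0 1) = f₂ '' Icc 0 1 := by
    have h1 := hA₂.image g
    rw [hfix₂0, hfix₂1] at h1
    exact arc_uniqueAB hnc h1 hA₂
  have hA₂gs : g.symm '' (f₂ '' Icc 0 1) = f₂ '' Icc 0 1 := by
    conv_lhs => rw [← hA₂g]
    rw [image_image]
    simp
  have hA₂cpt : IsCompact (f₂ '' Icc 0 1) := isCompact_Icc.image_of_continuousOn hf₂c
  have hTc : IsClosed (Icc 0 1 ∩ f₁ ⁻¹' (f₂ '' Icc 0 1)) :=
    hf₁c.preimage_isClosed_of_isClosed isClosed_Icc hA₂cpt.isClosed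
  obtain ⟨r₀, hr₀, rfl⟩ := hp₁
  have hr₀T : r₀ ∈ Icc 0 1 ∩ f₁ ⁻¹' (f₂ '' Icc 0 1) := ⟨hr₀, hp₂⟩
  have hTne : (Icc 0 1 ∩ f₁ ⁻¹' (f₂ '' Icc 0 1)).Nonempty := ⟨r₀, hr₀T⟩
  have hbb : BddBelow (Icc 0 1 ∩ f₁ ⁻¹' (f₂ '' Icc 0 1)) := ⟨0, fun x hx => hx.1.1⟩
  have hba : BddAbove (Icc 0 1 ∩ f₁ ⁻¹' (f₂ '' Icc 0 1)) := ⟨1, fun x hx => hx.1.2⟩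
  set T := Icc 0 1 ∩ f₁ ⁻¹' (f₂ '' Icc 0 1) with hTdef
  set s := sInf T with hsdef
  set t := sSup T with htdef
  have hsT : s ∈ T := hTc.csInf_mem hTne hbb
  have htT : t ∈ T := hTc.csSup_mem hTne hba
  have hord : ∀ u v, u ∈ T → v ∈ T → Icc u v ⊆ T := by
    intro u v hu hv q hq
    rcases eq_or_lt_of_le (hq.1.trans hq.2 : u ≤ v) with h | huv
    · have hqu : q = u := le_antisymm (h ▸ hq.2) hq.1
      exact hqu ▸ hu
    refine ⟨⟨hu.1.1.trans hq.1, hq.2.trans hv.1.2⟩, ?_⟩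
    obtain ⟨u', hu', hu'e⟩ := hu.2
    obtain ⟨v', hv', hv'e⟩ := hv.2
    have huv' : u' ≠ v' := by
      intro h
      have : f₁ u = f₁ v := by rw [← hu'e, ← hv'e, h]
      exact huv.ne (hf₁i hu.1 hv.1 this)
    have hsub1 : IsArcAB (f₁ '' Icc u v) (f₁ u) (f₁ v) := subarcAB hf₁c hf₁i hu.1 hv.1 huv
    have himg : f₁ '' Icc u v ⊆ f₂ '' Icc 0 1 := by
      rcases lt_or_gt_of_ne huv' with h | h
      · have h2 : IsArcAB (f₂ '' Icc u' v') (f₂ u') (f₂ v') := subarcAB hf₂c hf₂i hu' hv' h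
        rw [hu'e, hv'e] at h2
        rw [arc_uniqueAB hnc hsub1 h2]
        exact image_mono (Icc_subset_Icc hu'.1 hv'.2)
      · have h2 : IsArcAB (f₂ '' Icc v' u') (f₂ v') (f₂ u') := subarcAB hf₂c hf₂i hv' hu' h
        have h2' := h2.symm
        rw [hu'e, hv'e] at h2'
        rw [arc_uniqueAB hnc hsub1 h2']
        exact image_mono (Icc_subset_Icc hv'.1 hu'.2)
    exact himg (mem_image_of_mem _ hq)
  have hTeq : T = Icc s t :=
    subset_antisymm (fun x hx => ⟨csInf_le hbb hx, le_csSup hba hx⟩) (hord s t hsT htT)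
  obtain ⟨φ, hφspec, hφmono⟩ := arc_selfmapAB hnc hf₁c hf₁i g hfix₁0 hfix₁1
  have hsym0 : g.symm (f₁ 0) = f₁ 0 := by
    conv_lhs => rw [← hfix₁0]
    exact g.symm_apply_apply _
  have hsym1 : g.symm (f₁ 1) = f₁ 1 := by
    conv_lhs => rw [← hfix₁1]
    exact g.symm_apply_apply _
  obtain ⟨ψ, hψspec, hψmono⟩ := arc_selfmapAB hnc hf₁c hf₁i g.symm hsym0 hsym1
  have hφT : ∀ r ∈ T, φ r ∈ T := by
    intro r hr
    refine ⟨(hφspec r hr.1).1, ?_⟩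
    show f₁ (φ r) ∈ f₂ '' Icc 0 1
    rw [(hφspec r hr.1).2, ← hA₂g]
    exact mem_image_of_mem _ hr.2
  have hψT : ∀ r ∈ T, ψ r ∈ T := by
    intro r hr
    refine ⟨(hψspec r hr.1).1, ?_⟩
    show f₁ (ψ r) ∈ f₂ '' Icc 0 1
    rw [(hψspec r hr.1).2, ← hA₂gs]
    exact mem_image_of_mem _ hr.2
  have hφψ : ∀ r ∈ Icc (0:ℝ) 1, φ (ψ r) = r := by
    intro r hr
    have h1 := hψspec r hr
    have h2 := hφspec _ h1.1
    apply hf₁i h2.1 hr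
    rw [h2.2, h1.2]
    simp
  have hfs : g (f₁ s) = f₁ s := by
    have h1 : s ≤ φ s := by
      have := hφT s hsT; rw [hTeq] at this; exact this.1
    have h2 : s ≤ ψ s := by
      have := hψT s hsT; rw [hTeq] at this; exact this.1
    have h3 : φ s ≤ φ (ψ s) := hφmono s hsT.1 (ψ s) (hψspec s hsT.1).1 h2
    rw [hφψ s hsT.1] at h3
    have h4 : φ s = s := le_antisymm h3 h1
    rw [← (hφspec s hsT.1).2, h4]
  have hft : g (f₁ t) = f₁ t := by
    have h1 : φ t ≤ t := by
      have := hφT t htT; rw [hTeq] at this; exact this.2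
    have h2 : ψ t ≤ t := by
      have := hψT t htT; rw [hTeq] at this; exact this.2
    have h3 : φ (ψ t) ≤ φ t := hφmono (ψ t) (hψspec t htT.1).1 t htT.1 h2
    rw [hφψ t htT.1] at h3
    have h4 : φ t = t := le_antisymm h1 h3
    rw [← (hφspec t htT.1).2, h4]
  have hsend : s = 0 ∨ s = 1 := by
    have h : f₁ s ∈ ({f₁ 0, f₁ 1} : Set X) := by
      rw [← hab₁]; exact ⟨hfs, mem_image_of_mem _ hsT.1⟩
    simp only [mem_insert_iff, mem_singleton_iff] at h
    rcases h with h | h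
    · exact Or.inl (hf₁i hsT.1 h0m h)
    · exact Or.inr (hf₁i hsT.1 h1m h)
  have htend : t = 0 ∨ t = 1 := by
    have h : f₁ t ∈ ({f₁ 0, f₁ 1} : Set X) := by
      rw [← hab₁]; exact ⟨hft, mem_image_of_mem _ htT.1⟩
    simp only [mem_insert_iff, mem_singleton_iff] at h
    rcases h with h | h
    · exact Or.inl (hf₁i htT.1 h0m h)
    · exact Or.inr (hf₁i htT.1 h1m h)
  have hr₀s : s ≤ r₀ := csInf_le hbb hr₀T
  have hr₀t : r₀ ≤ t := le_csSup hba hr₀T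
  have hr₀0 : r₀ ≠ 0 := fun h => hp0 (by rw [h])
  have hr₀1 : r₀ ≠ 1 := fun h => hp1 (by rw [h])
  have hs0 : s = 0 := by
    rcases hsend with h | h
    · exact h
    · exact absurd (le_antisymm hr₀.2 (h ▸ hr₀s)) hr₀1
  have ht1 : t = 1 := by
    rcases htend with h | h
    · exact absurd (le_antisymm (h ▸ hr₀t) hr₀.1) hr₀0
    · exact h
  rintro x ⟨q, hq, rfl⟩
  have : q ∈ T := by rw [hTeq, hs0, ht1]; exact hq
  exact this.2


end ArcMachinery

/-- Two distinct austro-boreal arcs of a homeomorphism of a dendrite have disjoint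
interiors (the arcs minus their endpoints). -/
theorem austroBoreal_interiors_disjoint (X : Type*) [TopologicalSpace X]
    (hX : IsDendrite X) (g : X ≃ₜ X) (f₁ f₂ : ℝ → X)
    (hf₁c : ContinuousOn f₁ (Icc 0 1)) (hf₁i : InjOn f₁ (Icc 0 1))
    (hf₂c : ContinuousOn f₂ (Icc 0 1)) (hf₂i : InjOn f₂ (Icc 0 1))
    (hend₁ : f₁ 0 ≠ f₁ 1) (hend₂ : f₂ 0 ≠ f₂ 1)
    (hab₁ : {x : X | g x = x} ∩ (f₁ '' Icc 0 1) = {f₁ 0, f₁ 1})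
    (hab₂ : {x : X | g x = x} ∩ (f₂ '' Icc 0 1) = {f₂ 0, f₂ 1})
    (hdist : f₁ '' Icc 0 1 ≠ f₂ '' Icc 0 1) :
    (f₁ '' Icc 0 1 \ {f₁ 0, f₁ 1}) ∩ (f₂ '' Icc 0 1 \ {f₂ 0, f₂ 1}) = ∅ := by
  obtain ⟨-, -, -, hmet, -, hnc⟩ := hX
  haveI := hmet
  rw [eq_empty_iff_forall_notMem]
  rintro p ⟨⟨hp₁, hp1'⟩, hp₂, hp2'⟩
  simp only [mem_insert_iff, mem_singleton_iff, not_or] at hp1' hp2'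
  have hfix₁0 : g (f₁ 0) = f₁ 0 := by
    have h : f₁ 0 ∈ ({f₁ 0, f₁ 1} : Set X) := by left; rfl
    rw [← hab₁] at h; exact h.1
  have hfix₁1 : g (f₁ 1) = f₁ 1 := by
    have h : f₁ 1 ∈ ({f₁ 0, f₁ 1} : Set X) := by right; rfl
    rw [← hab₁] at h; exact h.1
  have hfix₂0 : g (f₂ 0) = f₂ 0 := by
    have h : f₂ 0 ∈ ({f₂ 0, f₂ 1} : Set X) := by left; rfl
    rw [← hab₂] at h; exact h.1
  have hfix₂1 : g (f₂ 1) = f₂ 1 := by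
    have h : f₂ 1 ∈ ({f₂ 0, f₂ 1} : Set X) := by right; rfl
    rw [← hab₂] at h; exact h.1
  have h12 := ab_subsetAB hnc g f₁ f₂ hf₁c hf₁i hf₂c hf₂i hab₁ hfix₂0 hfix₂1 p hp₁
    hp1'.1 hp1'.2 hp₂
  have h21 := ab_subsetAB hnc g f₂ f₁ hf₂c hf₂i hf₁c hf₁i hab₂ hfix₁0 hfix₁1 p hp₂
    hp2'.1 hp2'.2 hp₁
  exact hdist (subset_antisymm h12 h21)
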